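/- Let k be a field, V a k-vector space of dimension n+1, and let j ≥ 1 and a ≥ 0 be integers with a + 2 ≤ n + 1. Fix ω ∈ ⋀^j V and, for each m ≥ j, let c_m : ⋀^m V^* → ⋀^{m−j} V^* be the transpose of the wedge multiplication map ⋀^{m−j} V → ⋀^m V, y ↦ ω ∧ y (the contraction by ω). For v ∈ V let ι_v : ⋀^m V^* → ⋀^{m−1} V^* denote the transpose of the wedge multiplication map y ↦ v ∧ y (the Koszul differential, contraction by v). Assume that c_{a+1} and c_{a+2} are surjective. Then for every nonzero v ∈ V, ι_v maps ker c_{a+1} into ker c_a, and the induced k-linear map ker c_{a+1} → ker c_a has rank C(n, a) − C(n, a−j) (with the convention C(n, a−j) = 0 if a < j). In particular, v ↦ ι_v|_{ker c_{a+1}} is a matrix of linear forms in n+1 variables of constant rank C(n, a) − C(n, a−j), with source of dimension C(n+1, a+1) − C(n+1, a+1−j). -/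

import Mathlib

open ExteriorAlgebra

section FrozenDefs

variable (k : Type*) [Field k] (V : Type*) [AddCommGroup V] [Module k V]

/-- The contraction `c_m : (⋀^m V)^* → (⋀^{m−j} V)^*` by an element `ω ∈ ⋀^j V`:
the transpose (dual map) of the wedge multiplication `⋀^{m−j} V → ⋀^m V`, `y ↦ ω ∧ y`.
For `m < j` it is the zero map (the target being the dual of `⋀^{m−j} V` with
truncated subtraction). -/
noncomputable def contractionBy (j : ℕ) (ω : ExteriorAlgebra k V) (hω : ω ∈ ⋀[k]^j V)
    (m : ℕ) :
    Module.Dual k ↥(⋀[k]^m V) →ₗ[k] Module.Dual k ↥(⋀[k]^(m - j) V) :=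
  if h : j ≤ m then
    LinearMap.dualMap
      ((LinearMap.mulLeft k ω).restrict
        (p := ⋀[k]^(m - j) V) (q := ⋀[k]^m V)
        (fun x hx => by
          have h2 : ω * x ∈ ⋀[k]^(j + (m - j)) V := SetLike.mul_mem_graded hω hx
          rwa [Nat.add_sub_cancel' h] at h2))
  else 0

/-- The Koszul differential `ι_v : (⋀^{a+1} V)^* → (⋀^a V)^*` (contraction by `v ∈ V`):
the transpose (dual map) of the wedge multiplication `⋀^a V → ⋀^{a+1} V`, `y ↦ v ∧ y`. -/
noncomputable def koszulContraction (v : V) (a : ℕ) :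
    Module.Dual k ↥(⋀[k]^(a + 1) V) →ₗ[k] Module.Dual k ↥(⋀[k]^a V) :=
  LinearMap.dualMap
    ((LinearMap.mulLeft k (ι k v)).restrict
      (p := ⋀[k]^a V) (q := ⋀[k]^(a + 1) V)
      (fun x hx => by
        have h1 : ι k v ∈ ⋀[k]^1 V := by
          show ι k v ∈ LinearMap.range (ι k : V →ₗ[k] ExteriorAlgebra k V) ^ 1
          rw [pow_one]; exact LinearMap.mem_range_self _ v
        have h2 : (ι k v) * x ∈ ⋀[k]^(1 + a) V := SetLike.mul_mem_graded h1 hx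
        rwa [Nat.add_comm 1 a] at h2))

end FrozenDefs



section Aux
variable {k : Type*} [Field k] {V : Type*} [AddCommGroup V] [Module k V]

lemma kz_ι_mul_comm {j : ℕ} {w : ExteriorAlgebra k V} (hw : w ∈ ⋀[k]^j V) (v : V) :
    ι k v * w = ((-1 : k) ^ j) • (w * ι k v) := by
  refine Submodule.pow_induction_on_left' _ ?_ ?_ ?_ hw
  · intro r
    simp [Algebra.commutes]
  · intro x y i hx hy ihx ihy
    simp [mul_add, add_mul, ihx, ihy]
  · intro m hm i x hx ih
    obtain ⟨u, rfl⟩ := hm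
    have h1 : ι k v * ι k u = -(ι k u * ι k v) :=
      eq_neg_of_add_eq_zero_left (ι_add_mul_swap v u)
    calc ι k v * (ι k u * x) = (ι k v * ι k u) * x := (mul_assoc _ _ _).symm
      _ = -(ι k u * (ι k v * x)) := by rw [h1, neg_mul, mul_assoc]
      _ = -(ι k u * (((-1 : k) ^ i) • (x * ι k v))) := by rw [ih]
      _ = ((-1 : k) ^ (i + 1)) • (ι k u * x * ι k v) := by
          rw [mul_smul_comm, pow_succ, ← neg_smul]
          rw [mul_assoc]
          ring_nf

lemma kz_contract_mem (f : Module.Dual k V) {m : ℕ} {x : ExteriorAlgebra k V}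
    (hx : x ∈ ⋀[k]^m V) :
    CliffordAlgebra.contractLeft f x ∈ ⋀[k]^(m - 1) V ∧
      (m = 0 → CliffordAlgebra.contractLeft f x = 0) := by
  refine Submodule.pow_induction_on_left' _ ?_ ?_ ?_ hx
  · intro r
    simp [CliffordAlgebra.contractLeft_algebraMap]
  · intro x y i hx hy ihx ihy
    exact ⟨by rw [map_add]; exact add_mem ihx.1 ihy.1,
      fun h => by rw [map_add, ihx.2 h, ihy.2 h, add_zero]⟩
  · intro u hu i x hx ih
    obtain ⟨u, rfl⟩ := hu
    constructor
    · rw [CliffordAlgebra.contractLeft_ι_mul]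
      rcases Nat.eq_zero_or_pos i with hi | hi
      · subst hi
        rw [ih.2 rfl, mul_zero, sub_zero]
        exact Submodule.smul_mem _ _ hx
      · have : i - 1 + 1 = i := Nat.succ_pred_eq_of_pos hi
        refine sub_mem (Submodule.smul_mem _ _ ?_) ?_
        · simpa using hx
        · have h1 : ι k u ∈ ⋀[k]^1 V := by
            show ι k u ∈ LinearMap.range (ι k : V →ₗ[k] ExteriorAlgebra k V) ^ 1
            rw [pow_one]; exact LinearMap.mem_range_self _ u
          have := SetLike.mul_mem_graded h1 ih.1
          rwa [show 1 + (i - 1) = i + 1 - 1 by omega] at this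
    · omega
  done

end Aux

section Aux2
variable {k : Type*} [Field k] {V : Type*} [AddCommGroup V] [Module k V]

lemma kz_ι_mem_one (v : V) : ι k v ∈ ⋀[k]^1 V := by
  show ι k v ∈ LinearMap.range (ι k : V →ₗ[k] ExteriorAlgebra k V) ^ 1
  rw [pow_one]; exact LinearMap.mem_range_self _ v

lemma kz_exists_dual {v : V} (hv : v ≠ 0) : ∃ f : Module.Dual k V, f v = 1 := by
  have := (Module.forall_dual_apply_eq_zero_iff k v).not.2 hv
  push_neg at this
  obtain ⟨φ, hφ⟩ := this
  exact ⟨(φ v)⁻¹ • φ, by simp [inv_mul_cancel₀ hφ]⟩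

lemma kz_mem_zero_iff {x : ExteriorAlgebra k V} :
    x ∈ ⋀[k]^0 V ↔ ∃ r : k, algebraMap k (ExteriorAlgebra k V) r = x := by
  show x ∈ LinearMap.range (ι k : V →ₗ[k] ExteriorAlgebra k V) ^ 0 ↔ _
  rw [pow_zero]
  exact Submodule.mem_one

lemma kz_zero_inj {v : V} (hv : v ≠ 0) {x : ExteriorAlgebra k V}
    (hx : x ∈ ⋀[k]^0 V) (h : ι k v * x = 0) : x = 0 := by
  obtain ⟨r, rfl⟩ := kz_mem_zero_iff.1 hx
  rw [← Algebra.commutes, ← Algebra.smul_def] at h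
  rcases smul_eq_zero.1 h with hr | hιv
  · rw [hr, map_zero]
  · exact absurd ((ι_eq_zero_iff (R := k) v).1 hιv) hv

lemma kz_koszul_exact {v : V} (hv : v ≠ 0) {m : ℕ} {x : ExteriorAlgebra k V}
    (hx : x ∈ ⋀[k]^(m + 1) V) (h : ι k v * x = 0) :
    ∃ y ∈ ⋀[k]^m V, x = ι k v * y := by
  obtain ⟨f, hf⟩ := kz_exists_dual (k := k) hv
  refine ⟨CliffordAlgebra.contractLeft f x, by simpa using (kz_contract_mem f hx).1, ?_⟩
  have := CliffordAlgebra.contractLeft_ι_mul f v x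
  rw [h, map_zero, hf, one_smul] at this
  exact sub_eq_zero.1 this.symm
lemma kz_pow_congr {m m' : ℕ} (h : m = m') {x : ExteriorAlgebra k V}
    (hx : x ∈ ⋀[k]^m V) : x ∈ ⋀[k]^m' V := h ▸ hx

end Aux2

section BasisPart
variable {k : Type*} [Field k] {V : Type*} [AddCommGroup V] [Module k V]
variable {N : ℕ}

/-- The wedge of the basis vectors indexed by an `m`-element subset. -/
noncomputable def kzW (b : Module.Basis (Fin N) k V) (m : ℕ)
    (s : {s : Finset (Fin N) // s.card = m}) : ExteriorAlgebra k V :=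
  ιMulti k m fun i => b (Finset.orderIsoOfFin s.1 s.2 i)

lemma kzW_mem (b : Module.Basis (Fin N) k V) (m : ℕ) (s : {s : Finset (Fin N) // s.card = m}) :
    kzW b m s ∈ ⋀[k]^m V :=
  ιMulti_range k m ⟨_, rfl⟩

lemma kz_span (b : Module.Basis (Fin N) k V) (m : ℕ) :
    Submodule.span k (Set.range (kzW b m)) = ⋀[k]^m V := by
  classical
  refine le_antisymm (Submodule.span_le.2 ?_) ?_
  · rintro _ ⟨s, rfl⟩; exact kzW_mem b m s
  · rw [← ιMulti_span_fixedDegree]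
    refine Submodule.span_le.2 ?_
    rintro _ ⟨u, rfl⟩
    have h1 : (ιMulti k m (M := V)) u
        = ∑ r : Fin m → Fin N,
            (∏ i, b.repr (u i) (r i)) • (ιMulti k m (M := V)) (fun i => b (r i)) := by
      calc (ιMulti k m (M := V)) u
          = (ιMulti k m (M := V)) (fun i => ∑ l : Fin N, b.repr (u i) l • b l) := by
            congr 1; funext i; rw [b.sum_repr]
        _ = ∑ r : Fin m → Fin N,
              (ιMulti k m (M := V)) (fun i => b.repr (u i) (r i) • b (r i)) :=
            (ιMulti k m (M := V)).toMultilinearMap.map_sum _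
        _ = ∑ r : Fin m → Fin N,
              (∏ i, b.repr (u i) (r i)) • (ιMulti k m (M := V)) (fun i => b (r i)) :=
            Finset.sum_congr rfl fun r _ =>
              (ιMulti k m (M := V)).toMultilinearMap.map_smul_univ _ _
    rw [h1]
    refine Submodule.sum_mem _ fun r _ => Submodule.smul_mem _ _ ?_
    by_cases hr : Function.Injective r
    · set s : Finset (Fin N) := Finset.image r Finset.univ with hs
      have hcard : s.card = m := by
        rw [hs, Finset.card_image_of_injective _ hr, Finset.card_univ, Fintype.card_fin]
      have hmem : ∀ i, r i ∈ s := fun i => Finset.mem_image.2 ⟨i, Finset.mem_univ _, rfl⟩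
      have hbij : Function.Bijective (fun i => (⟨r i, hmem i⟩ : s)) := by
        rw [Fintype.bijective_iff_injective_and_card]
        constructor
        · intro i i' h
          exact hr (congrArg Subtype.val h)
        · rw [Fintype.card_coe, hcard, Fintype.card_fin]
      let e : Fin m ≃ s := Equiv.ofBijective _ hbij
      let σ : Equiv.Perm (Fin m) := e.trans (Finset.orderIsoOfFin s hcard).toEquiv.symm
      have hcomp : (fun i => b ((Finset.orderIsoOfFin s hcard) i)) ∘ σ = fun i => b (r i) := by
        funext i
        simp only [Function.comp_apply, σ, Equiv.trans_apply]
        congr 1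
        have : (Finset.orderIsoOfFin s hcard) ((Finset.orderIsoOfFin s hcard).toEquiv.symm (e i))
            = e i := (Finset.orderIsoOfFin s hcard).apply_symm_apply _
        rw [this]
        rfl
      have hperm := AlternatingMap.map_perm (ιMulti k m (M := V))
        (fun i => b ((Finset.orderIsoOfFin s hcard) i)) σ
      rw [hcomp] at hperm
      rw [hperm]
      have hwmem : kzW b m ⟨s, hcard⟩ ∈ Submodule.span k (Set.range (kzW b m)) :=
        Submodule.subset_span ⟨⟨s, hcard⟩, rfl⟩
      rcases Int.units_eq_one_or (Equiv.Perm.sign σ) with h | h <;> rw [h]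
      · simpa [kzW] using hwmem
      · simpa [kzW] using Submodule.neg_mem _ hwmem
    · rw [AlternatingMap.map_eq_zero_of_not_injective _ _
        (fun hinj => hr (fun i i' h => hinj (by simp [h])))]
      exact Submodule.zero_mem _

noncomputable def kzFunctional (b : Module.Basis (Fin N) k V) (m : ℕ)
    (s : {s : Finset (Fin N) // s.card = m}) : ExteriorAlgebra k V →ₗ[k] k :=
  ExteriorAlgebra.liftAlternating
    (Pi.single m ((Matrix.detRowAlternating (R := k) (n := Fin m)).compLinearMap
      (LinearMap.pi fun p => b.coord ((Finset.orderIsoOfFin s.1 s.2 p : Fin N)))))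

lemma kzFunctional_apply (b : Module.Basis (Fin N) k V) (m : ℕ)
    (s t : {s : Finset (Fin N) // s.card = m}) :
    kzFunctional b m s (kzW b m t) = if s = t then 1 else 0 := by
  classical
  rw [kzFunctional, kzW, ExteriorAlgebra.liftAlternating_apply_ιMulti, Pi.single_eq_same,
    AlternatingMap.compLinearMap_apply]
  have hentry : ∀ q p : Fin m,
      LinearMap.pi (fun p => b.coord ((Finset.orderIsoOfFin s.1 s.2 p : Fin N)))
        (b ((Finset.orderIsoOfFin t.1 t.2 q : Fin N))) p
      = if ((Finset.orderIsoOfFin t.1 t.2 q : Fin N)) = ((Finset.orderIsoOfFin s.1 s.2 p : Fin N))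
        then 1 else 0 := by
    intro q p
    simp [LinearMap.pi_apply, Module.Basis.coord_apply, Module.Basis.repr_self, Finsupp.single_apply]
    congr 1
  by_cases hst : s = t
  · subst hst
    rw [if_pos rfl]
    have hM : ∀ q p : Fin m,
        (LinearMap.pi (fun p => b.coord ((Finset.orderIsoOfFin s.1 s.2 p : Fin N))))
          (b ((Finset.orderIsoOfFin s.1 s.2 q : Fin N))) p
        = (1 : Matrix (Fin m) (Fin m) k) q p := by
      intro q p
      rw [hentry q p, Matrix.one_apply]
      by_cases h : q = p
      · subst h; simp
      · rw [if_neg h, if_neg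
          (fun hh => h ((Finset.orderIsoOfFin s.1 s.2).injective (Subtype.ext hh)))]
    show Matrix.det _ = 1
    rw [show (fun q => (LinearMap.pi fun p => b.coord ((Finset.orderIsoOfFin s.1 s.2 p : Fin N)))
          (b ((Finset.orderIsoOfFin s.1 s.2 q : Fin N)))) = (1 : Matrix (Fin m) (Fin m) k)
        from funext fun q => funext fun p => hM q p]
    exact Matrix.det_one
  · rw [if_neg hst]
    have hts : ¬ t.1 ⊆ s.1 := by
      intro hsub
      refine hst (Subtype.ext ?_)
      exact (Finset.eq_of_subset_of_card_le hsub (by rw [s.2, t.2])).symm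
    obtain ⟨x, hxt, hxs⟩ := Finset.not_subset.1 hts
    set q0 : Fin m := (Finset.orderIsoOfFin t.1 t.2).symm ⟨x, hxt⟩ with hq0def
    show Matrix.det _ = 0
    refine Matrix.det_eq_zero_of_row_eq_zero q0 ?_
    intro p
    show (LinearMap.pi (fun p => b.coord ((Finset.orderIsoOfFin s.1 s.2 p : Fin N))))
      (b ((Finset.orderIsoOfFin t.1 t.2 q0 : Fin N))) p = 0
    rw [hentry q0 p]
    have hq0 : ((Finset.orderIsoOfFin t.1 t.2 q0 : Fin N)) = x := by
      rw [hq0def, OrderIso.apply_symm_apply]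
    rw [hq0]
    refine if_neg (fun h => hxs ?_)
    rw [h]
    exact Finset.coe_mem _

lemma kz_indep (b : Module.Basis (Fin N) k V) (m : ℕ) : LinearIndependent k (kzW b m) := by
  classical
  rw [Fintype.linearIndependent_iff]
  intro g hg s
  have h0 := congrArg (kzFunctional b m s) hg
  rw [map_sum, map_zero] at h0
  have h1 : ∀ t, kzFunctional b m s (g t • kzW b m t) = if s = t then g t else 0 := by
    intro t
    rw [map_smul, kzFunctional_apply, smul_eq_mul]
    by_cases h : s = t <;> simp [h]
  rw [Finset.sum_congr rfl (fun t _ => h1 t), Finset.sum_ite_eq] at h0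
  simpa using h0

noncomputable def kzBasis (b : Module.Basis (Fin N) k V) (m : ℕ) :
    Module.Basis {s : Finset (Fin N) // s.card = m} k (⋀[k]^m V) := by
  refine Module.Basis.mk (v := fun s => (⟨kzW b m s, kzW_mem b m s⟩ : ⋀[k]^m V)) ?_ ?_
  · exact LinearIndependent.of_comp ((⋀[k]^m V).subtype) (by exact kz_indep b m)
  · rintro ⟨x, hx⟩ -
    rw [← kz_span b m] at hx
    have h2 : x ∈ Submodule.map (⋀[k]^m V).subtype
        (Submodule.span k (Set.range fun s => (⟨kzW b m s, kzW_mem b m s⟩ : ⋀[k]^m V))) := by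
      rw [Submodule.map_span]
      refine Submodule.span_mono ?_ hx
      rintro _ ⟨t, rfl⟩
      exact ⟨⟨kzW b m t, kzW_mem b m t⟩, ⟨t, rfl⟩, rfl⟩
    obtain ⟨y, hy, hyx⟩ := h2
    have : y = ⟨x, ((kz_span b m) ▸ hx)⟩ := Subtype.ext hyx
    rwa [this] at hy

lemma kz_finrank (b : Module.Basis (Fin N) k V) (m : ℕ) :
    Module.finrank k (⋀[k]^m V) = N.choose m := by
  classical
  rw [Module.finrank_eq_card_basis (kzBasis b m), Fintype.card_finset_len, Fintype.card_fin]

lemma kz_finiteDimensional (b : Module.Basis (Fin N) k V) (m : ℕ) :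
    FiniteDimensional k (⋀[k]^m V) :=
  Module.Finite.of_basis (kzBasis b m)

end BasisPart

section MapsPart
variable {k : Type*} [Field k] {V : Type*} [AddCommGroup V] [Module k V]

/-- Left multiplication as a map between prescribed exterior powers. -/
noncomputable def kzMul (w : ExteriorAlgebra k V) (p q : ℕ)
    (h : ∀ x ∈ ⋀[k]^p V, w * x ∈ ⋀[k]^q V) : ⋀[k]^p V →ₗ[k] ⋀[k]^q V :=
  (LinearMap.mulLeft k w).restrict h

@[simp] lemma kzMul_apply (w : ExteriorAlgebra k V) (p q : ℕ)
    (h : ∀ x ∈ ⋀[k]^p V, w * x ∈ ⋀[k]^q V) (x : ⋀[k]^p V) :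
    (kzMul w p q h x : ExteriorAlgebra k V) = w * (x : ExteriorAlgebra k V) := rfl

lemma kz_mul_mem {w : ExteriorAlgebra k V} {p : ℕ} (hw : w ∈ ⋀[k]^p V) (q r : ℕ)
    (hr : p + q = r) : ∀ x ∈ ⋀[k]^q V, w * x ∈ ⋀[k]^r V := fun x hx =>
  hr ▸ SetLike.mul_mem_graded hw hx

lemma kz_mem_v_mul (v : V) (m : ℕ) : ∀ x ∈ ⋀[k]^m V, ι k v * x ∈ ⋀[k]^(m+1) V := by
  intro x hx
  have := SetLike.mul_mem_graded (kz_ι_mem_one (k := k) v) hx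
  rwa [Nat.add_comm] at this

lemma kz_ker_v_zero {v : V} (hv : v ≠ 0) (h : ∀ x ∈ ⋀[k]^0 V, ι k v * x ∈ ⋀[k]^1 V) :
    LinearMap.ker (kzMul (ι k v) 0 1 h) = ⊥ := by
  rw [LinearMap.ker_eq_bot']
  intro x hx
  have h0 : ι k v * (x : ExteriorAlgebra k V) = 0 := by
    have := congrArg (Subtype.val : (⋀[k]^1 V) → ExteriorAlgebra k V) hx
    simpa using this
  exact Subtype.ext (kz_zero_inj hv x.2 h0)

lemma kz_ker_v_succ {v : V} (hv : v ≠ 0) (m : ℕ)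
    (h1 : ∀ x ∈ ⋀[k]^m V, ι k v * x ∈ ⋀[k]^(m+1) V)
    (h2 : ∀ x ∈ ⋀[k]^(m+1) V, ι k v * x ∈ ⋀[k]^(m+2) V) :
    LinearMap.ker (kzMul (ι k v) (m+1) (m+2) h2)
      = LinearMap.range (kzMul (ι k v) m (m+1) h1) := by
  ext x
  rw [LinearMap.mem_ker, LinearMap.mem_range]
  constructor
  · intro hx
    have h0 : ι k v * (x : ExteriorAlgebra k V) = 0 := by
      have := congrArg (Subtype.val : (⋀[k]^(m+2) V) → ExteriorAlgebra k V) hx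
      simpa using this
    obtain ⟨y, hy, hxy⟩ := kz_koszul_exact hv x.2 h0
    exact ⟨⟨y, hy⟩, Subtype.ext (by simpa using hxy.symm)⟩
  · rintro ⟨y, rfl⟩
    refine Subtype.ext ?_
    show ι k v * (ι k v * (y : ExteriorAlgebra k V)) = 0
    rw [← mul_assoc, ι_sq_zero, zero_mul]

lemma kz_rank_v (n : ℕ) (b : Module.Basis (Fin (n+1)) k V) {v : V} (hv : v ≠ 0) :
    ∀ m (h : ∀ x ∈ ⋀[k]^m V, ι k v * x ∈ ⋀[k]^(m+1) V),
      Module.finrank k (LinearMap.range (kzMul (ι k v) m (m+1) h)) = n.choose m := by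
  intro m
  induction m with
  | zero =>
    intro h
    haveI := kz_finiteDimensional b 0
    have h1 := LinearMap.finrank_range_add_finrank_ker (kzMul (ι k v) 0 1 h)
    rw [kz_ker_v_zero hv h, finrank_bot, kz_finrank b 0] at h1
    simpa using h1
  | succ m ih =>
    intro h
    show Module.finrank k (LinearMap.range (kzMul (ι k v) (m+1) (m+2) h)) = n.choose (m+1)
    haveI := kz_finiteDimensional b (m+1)
    have h1 := LinearMap.finrank_range_add_finrank_ker (kzMul (ι k v) (m+1) (m+2) h)
    rw [kz_ker_v_succ hv m (kz_mem_v_mul v m) h, ih (kz_mem_v_mul v m),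
      kz_finrank b (m+1), Nat.choose_succ_succ] at h1
    simp only [Nat.succ_eq_add_one] at h1 ⊢
    omega

lemma kz_finrank_map_add {A B : Type*} [AddCommGroup A] [Module k A] [AddCommGroup B]
    [Module k B] (f : A →ₗ[k] B) (K : Submodule k A) [FiniteDimensional k K] :
    Module.finrank k (Submodule.map f K)
      + Module.finrank k ((LinearMap.ker f ⊓ K : Submodule k A))
      = Module.finrank k K := by
  have h1 := LinearMap.finrank_range_add_finrank_ker (f ∘ₗ K.subtype)
  rw [LinearMap.range_comp, Submodule.range_subtype, LinearMap.ker_comp] at h1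
  have h2 : Submodule.comap K.subtype (LinearMap.ker f)
      = Submodule.comap K.subtype (LinearMap.ker f ⊓ K) := by
    rw [Submodule.comap_inf, Submodule.comap_subtype_self, inf_top_eq]
  rw [h2, (Submodule.comapSubtypeEquivOfLe (inf_le_right : LinearMap.ker f ⊓ K ≤ K)).finrank_eq]
    at h1
  exact h1

lemma kz_finrank_ann {A : Type*} [AddCommGroup A] [Module k A] [FiniteDimensional k A]
    (W : Submodule k A) :
    Module.finrank k W.dualAnnihilator + Module.finrank k W = Module.finrank k A := by
  rw [← (Subspace.quotEquivAnnihilator W).finrank_eq]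
  exact Submodule.finrank_quotient_add_finrank W

lemma kz_ker_comp {v : V} {ω : ExteriorAlgebra k V} {j a : ℕ} (hja : j ≤ a)
    (hω : ω ∈ ⋀[k]^j V)
    (hinj : ∀ y ∈ ⋀[k]^(a+1-j) V, ω * y = 0 → y = 0)
    (hφ : ∀ x ∈ ⋀[k]^(a-j) V, (ι k v * ω) * x ∈ ⋀[k]^(a+1) V)
    (hl : ∀ x ∈ ⋀[k]^(a-j) V, ι k v * x ∈ ⋀[k]^(a-j+1) V) :
    LinearMap.ker (kzMul (ι k v * ω) (a-j) (a+1) hφ)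
      = LinearMap.ker (kzMul (ι k v) (a-j) (a-j+1) hl) := by
  have hcomm : ∀ z : ExteriorAlgebra k V,
      (ι k v * ω) * z = ((-1 : k)^j) • (ω * (ι k v * z)) := by
    intro z
    rw [kz_ι_mul_comm hω v, smul_mul_assoc, mul_assoc]
  ext x
  rw [LinearMap.mem_ker, LinearMap.mem_ker, Subtype.ext_iff, Subtype.ext_iff]
  simp only [ZeroMemClass.coe_zero]
  have e1 : ((kzMul (ι k v * ω) (a-j) (a+1) hφ x : ⋀[k]^(a+1) V) : ExteriorAlgebra k V)
      = (ι k v * ω) * (x : ExteriorAlgebra k V) := rfl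
  have e2 : ((kzMul (ι k v) (a-j) (a-j+1) hl x : ⋀[k]^(a-j+1) V) : ExteriorAlgebra k V)
      = ι k v * (x : ExteriorAlgebra k V) := rfl
  rw [e1, e2]
  show (ι k v * ω) * (x : ExteriorAlgebra k V) = 0 ↔ _
  rw [hcomm]
  constructor
  · intro h0
    have h1 : ω * (ι k v * (x : ExteriorAlgebra k V)) = 0 := by
      have := smul_eq_zero.1 h0
      rcases this with h | h
      · exact absurd h (by simp)
      · exact h
    exact hinj _ (kz_pow_congr (by omega) (kz_mem_v_mul v (a-j) _ x.2)) h1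
  · intro h0
    rw [h0, mul_zero, smul_zero]

lemma kz_inter {v : V} (hv : v ≠ 0) {ω : ExteriorAlgebra k V} {j a : ℕ} (hja : j ≤ a)
    (hω : ω ∈ ⋀[k]^j V)
    (hinj2 : ∀ y ∈ ⋀[k]^(a+2-j) V, ω * y = 0 → y = 0)
    (hgw : ∀ x ∈ ⋀[k]^(a+1-j) V, ω * x ∈ ⋀[k]^(a+1) V)
    (hgv : ∀ x ∈ ⋀[k]^a V, ι k v * x ∈ ⋀[k]^(a+1) V)
    (hφ : ∀ x ∈ ⋀[k]^(a-j) V, (ι k v * ω) * x ∈ ⋀[k]^(a+1) V) :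
    LinearMap.range (kzMul ω (a+1-j) (a+1) hgw)
        ⊓ LinearMap.range (kzMul (ι k v) a (a+1) hgv)
      = LinearMap.range (kzMul (ι k v * ω) (a-j) (a+1) hφ) := by
  have hcomm : ∀ z : ExteriorAlgebra k V,
      (ι k v * ω) * z = ((-1 : k)^j) • (ω * (ι k v * z)) := by
    intro z
    rw [kz_ι_mul_comm hω v, smul_mul_assoc, mul_assoc]
  ext x
  rw [Submodule.mem_inf, LinearMap.mem_range, LinearMap.mem_range, LinearMap.mem_range]
  constructor
  · rintro ⟨⟨y, hy⟩, ⟨u, hu⟩⟩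
    -- x.1 = ω * y.1 = ι v * u.1
    have hxx : ι k v * ((x : ⋀[k]^(a+1) V) : ExteriorAlgebra k V) = 0 := by
      have h1 : ((x : ⋀[k]^(a+1) V) : ExteriorAlgebra k V)
          = ι k v * (u : ExteriorAlgebra k V) := by
        rw [← hu]; rfl
      rw [h1, ← mul_assoc, ι_sq_zero, zero_mul]
    have h2 : ((x : ⋀[k]^(a+1) V) : ExteriorAlgebra k V)
        = ω * (y : ExteriorAlgebra k V) := by rw [← hy]; rfl
    have h3 : ω * (ι k v * (y : ExteriorAlgebra k V)) = 0 := by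
      have h4 : ι k v * (ω * (y : ExteriorAlgebra k V)) = 0 := by rw [← h2]; exact hxx
      rw [← mul_assoc, hcomm] at h4
      rcases smul_eq_zero.1 h4 with h | h
      · exact absurd h (by simp)
      · exact h
    have h6 : ι k v * (y : ExteriorAlgebra k V) = 0 :=
      hinj2 _ (kz_pow_congr (by omega) (kz_mem_v_mul v (a+1-j) _ y.2)) h3
    -- y ∈ ⋀^(a+1-j) = ⋀^((a-j)+1)
    have hy' : (y : ExteriorAlgebra k V) ∈ ⋀[k]^((a-j)+1) V :=
      kz_pow_congr (by omega) y.2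
    obtain ⟨z, hz, hyz⟩ := kz_koszul_exact hv hy' h6
    refine ⟨((-1 : k)^j) • ⟨z, hz⟩, Subtype.ext ?_⟩
    show (ι k v * ω) * (((-1 : k)^j) • z) = _
    rw [mul_smul_comm, hcomm, smul_smul, ← pow_add]
    have : ((-1 : k) ^ (j + j)) = 1 := Even.neg_one_pow ⟨j, rfl⟩
    rw [this, one_smul, ← hyz, ← h2]
  · rintro ⟨z, rfl⟩
    constructor
    · have hmem : ι k v * (z : ExteriorAlgebra k V) ∈ ⋀[k]^(a+1-j) V :=
        kz_pow_congr (by omega) (kz_mem_v_mul v (a-j) _ z.2)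
      refine ⟨((-1 : k)^j) • ⟨ι k v * (z : ExteriorAlgebra k V), hmem⟩, Subtype.ext ?_⟩
      show ω * (((-1 : k)^j) • (ι k v * (z : ExteriorAlgebra k V)))
          = (ι k v * ω) * (z : ExteriorAlgebra k V)
      rw [mul_smul_comm, ← hcomm]
    · refine ⟨⟨ω * (z : ExteriorAlgebra k V), kz_mul_mem hω (a-j) a (by omega) _ z.2⟩,
        Subtype.ext ?_⟩
      show ι k v * (ω * (z : ExteriorAlgebra k V)) = _
      rw [← mul_assoc]
      rfl

end MapsPart


variable (k : Type*) [Field k] (V : Type*) [AddCommGroup V] [Module k V]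

set_option maxHeartbeats 1600000 in
/-- If `dim V = n+1`, `j ≥ 1`, `a + 2 ≤ n + 1`, `ω ∈ ⋀^j V`, and the contractions
`c_{a+1}` and `c_{a+2}` by `ω` are surjective, then for every nonzero `v ∈ V` the Koszul
contraction `ι_v` maps `ker c_{a+1}` into `ker c_a`, and the induced map
`ker c_{a+1} → ker c_a` has rank `C(n, a) − C(n, a−j)` (the last term being `0` when
`a < j`). -/
theorem koszul_restricted_to_contraction_kernels_constant_rank
    [FiniteDimensional k V] (n : ℕ) (hdim : Module.finrank k V = n + 1)
    (j a : ℕ) (hj : 1 ≤ j) (ha : a + 2 ≤ n + 1)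
    (ω : ExteriorAlgebra k V) (hω : ω ∈ ⋀[k]^j V)
    (hsurj1 : Function.Surjective (contractionBy k V j ω hω (a + 1)))
    (hsurj2 : Function.Surjective (contractionBy k V j ω hω (a + 2))) :
    ∀ v : V, v ≠ 0 →
      (∀ f ∈ LinearMap.ker (contractionBy k V j ω hω (a + 1)),
        koszulContraction k V v a f ∈ LinearMap.ker (contractionBy k V j ω hω a)) ∧
      (Module.finrank k
          ↥(Submodule.map (koszulContraction k V v a)
            (LinearMap.ker (contractionBy k V j ω hω (a + 1)))) : ℤ) =
        (Nat.choose n a : ℤ) - (if j ≤ a then (Nat.choose n (a - j) : ℤ) else 0) := by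
  intro v hv
  classical
  have b : Module.Basis (Fin (n+1)) k V := Module.finBasisOfFinrankEq k V hdim
  haveI hE1 := kz_finiteDimensional b (a+1)
  haveI hE0 := kz_finiteDimensional b a
  haveI hEp := kz_finiteDimensional b (a-j)
  haveI hEq := kz_finiteDimensional b (a+1-j)
  by_cases hj1 : j ≤ a + 1
  swap
  · -- then contractionBy (a+1) is the zero map onto a nonzero space: contradiction
    exfalso
    have hc0 : contractionBy k V j ω hω (a+1) = 0 := by
      unfold contractionBy; rw [dif_neg hj1]
    rw [hc0] at hsurj1
    have h0 : a + 1 - j = 0 := by omega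
    let s0 : {s : Finset (Fin (n+1)) // s.card = a + 1 - j} :=
      ⟨(∅ : Finset (Fin (n+1))), by rw [h0]; exact Finset.card_empty⟩
    obtain ⟨g, hg⟩ := hsurj1 ((kzBasis b (a+1-j)).coord s0)
    have h1 : (kzBasis b (a+1-j)).coord s0 ((kzBasis b (a+1-j)) s0) = 1 := by
      simp
    rw [← hg] at h1
    simp at h1
  -- main case : j ≤ a + 1
  have hj2 : j ≤ a + 2 := by omega
  have hmw1 : ∀ x ∈ ⋀[k]^(a+1-j) V, ω * x ∈ ⋀[k]^(a+1) V :=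
    kz_mul_mem hω _ _ (by omega)
  have hmw2 : ∀ x ∈ ⋀[k]^(a+2-j) V, ω * x ∈ ⋀[k]^(a+2) V :=
    kz_mul_mem hω _ _ (by omega)
  have hc1 : contractionBy k V j ω hω (a+1)
      = LinearMap.dualMap (kzMul ω (a+1-j) (a+1) hmw1) := by
    unfold contractionBy; rw [dif_pos hj1]; rfl
  have hc2 : contractionBy k V j ω hω (a+2)
      = LinearMap.dualMap (kzMul ω (a+2-j) (a+2) hmw2) := by
    unfold contractionBy; rw [dif_pos hj2]; rfl
  have hk : koszulContraction k V v a
      = LinearMap.dualMap (kzMul (ι k v) a (a+1) (kz_mem_v_mul v a)) := rfl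
  have hinj1 : Function.Injective (kzMul ω (a+1-j) (a+1) hmw1) := by
    rw [← LinearMap.dualMap_surjective_iff]
    rw [hc1] at hsurj1; exact hsurj1
  have hinj2 : Function.Injective (kzMul ω (a+2-j) (a+2) hmw2) := by
    rw [← LinearMap.dualMap_surjective_iff]
    rw [hc2] at hsurj2; exact hsurj2
  have einj1 : ∀ y ∈ ⋀[k]^(a+1-j) V, ω * y = 0 → y = 0 := by
    intro y hy h0
    have hz : kzMul ω (a+1-j) (a+1) hmw1 ⟨y, hy⟩ = kzMul ω (a+1-j) (a+1) hmw1 0 := by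
      rw [map_zero]
      exact Subtype.ext h0
    exact congrArg Subtype.val (hinj1 hz)
  have einj2 : ∀ y ∈ ⋀[k]^(a+2-j) V, ω * y = 0 → y = 0 := by
    intro y hy h0
    have hz : kzMul ω (a+2-j) (a+2) hmw2 ⟨y, hy⟩ = kzMul ω (a+2-j) (a+2) hmw2 0 := by
      rw [map_zero]
      exact Subtype.ext h0
    exact congrArg Subtype.val (hinj2 hz)
  constructor
  · -- the kernel containment
    intro f hf
    by_cases hja : j ≤ a
    · rw [LinearMap.mem_ker, hk]
      have hc0 : contractionBy k V j ω hω a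
          = LinearMap.dualMap (kzMul ω (a-j) a (kz_mul_mem hω _ _ (by omega))) := by
        unfold contractionBy; rw [dif_pos hja]; rfl
      rw [hc0]
      refine LinearMap.ext fun x => ?_
      rw [LinearMap.dualMap_apply, LinearMap.dualMap_apply, LinearMap.zero_apply]
      have hmemx : ι k v * ((x : ⋀[k]^(a-j) V) : ExteriorAlgebra k V) ∈ ⋀[k]^(a+1-j) V :=
        kz_pow_congr (by omega) (kz_mem_v_mul v (a-j) _ x.2)
      have hval : kzMul (ι k v) a (a+1) (kz_mem_v_mul v a)
            (kzMul ω (a-j) a (kz_mul_mem hω _ _ (by omega)) x)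
          = ((-1 : k)^j) • kzMul ω (a+1-j) (a+1) hmw1
              ⟨ι k v * (x : ExteriorAlgebra k V), hmemx⟩ := by
        refine Subtype.ext ?_
        show ι k v * (ω * (x : ExteriorAlgebra k V)) = _
        rw [← mul_assoc, kz_ι_mul_comm hω v, smul_mul_assoc, mul_assoc]
        rfl
      rw [hval, LinearMap.map_smul]
      have hf1 : f (kzMul ω (a+1-j) (a+1) hmw1 ⟨ι k v * (x : ExteriorAlgebra k V), hmemx⟩)
          = 0 := by
        have h2 : LinearMap.dualMap (kzMul ω (a+1-j) (a+1) hmw1) f = 0 := by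
          rw [← hc1]; exact hf
        exact LinearMap.congr_fun h2 _
      rw [hf1, smul_zero]
    · have hc0 : contractionBy k V j ω hω a = 0 := by
        unfold contractionBy; rw [dif_neg hja]
      rw [LinearMap.mem_ker, hc0, LinearMap.zero_apply]
  · -- the rank computation
    have hKmap : Module.finrank k (Submodule.map (koszulContraction k V v a)
          (LinearMap.ker (contractionBy k V j ω hω (a+1))))
        + Module.finrank k
            ((LinearMap.ker (LinearMap.dualMap (kzMul (ι k v) a (a+1) (kz_mem_v_mul v a)))
              ⊓ LinearMap.ker (LinearMap.dualMap (kzMul ω (a+1-j) (a+1) hmw1)) :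
                Submodule k (Module.Dual k (⋀[k]^(a+1) V))))
        = Module.finrank k (LinearMap.ker (LinearMap.dualMap (kzMul ω (a+1-j) (a+1) hmw1))) := by
      rw [hk, hc1]
      exact kz_finrank_map_add _ _
    rw [LinearMap.ker_dualMap_eq_dualAnnihilator_range,
      LinearMap.ker_dualMap_eq_dualAnnihilator_range,
      ← Submodule.dualAnnihilator_sup_eq] at hKmap
    have e2 := kz_finrank_ann (LinearMap.range (kzMul ω (a+1-j) (a+1) hmw1))
    have e3 := kz_finrank_ann (LinearMap.range (kzMul (ι k v) a (a+1) (kz_mem_v_mul v a))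
      ⊔ LinearMap.range (kzMul ω (a+1-j) (a+1) hmw1))
    have e4 := Submodule.finrank_sup_add_finrank_inf_eq
      (LinearMap.range (kzMul (ι k v) a (a+1) (kz_mem_v_mul v a)))
      (LinearMap.range (kzMul ω (a+1-j) (a+1) hmw1))
    have e5 : Module.finrank k
        (LinearMap.range (kzMul (ι k v) a (a+1) (kz_mem_v_mul v a))) = n.choose a :=
      kz_rank_v n b hv a (kz_mem_v_mul v a)
    by_cases hja : j ≤ a
    · -- intersection has dimension `n.choose (a-j)`
      have hφmem : ∀ x ∈ ⋀[k]^(a-j) V, (ι k v * ω) * x ∈ ⋀[k]^(a+1) V :=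
        kz_mul_mem (SetLike.mul_mem_graded (kz_ι_mem_one v) hω) _ _ (by omega)
      have hint := kz_inter hv hja hω einj2 hmw1 (kz_mem_v_mul v a) hφmem
      have hφ := LinearMap.finrank_range_add_finrank_ker
        (kzMul (ι k v * ω) (a-j) (a+1) hφmem)
      have hl := LinearMap.finrank_range_add_finrank_ker
        (kzMul (ι k v) (a-j) (a-j+1) (kz_mem_v_mul v (a-j)))
      have hker := kz_ker_comp hja hω einj1 hφmem (kz_mem_v_mul v (a-j))
      have hrl : Module.finrank k
          (LinearMap.range (kzMul (ι k v) (a-j) (a-j+1) (kz_mem_v_mul v (a-j))))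
          = n.choose (a-j) :=
        kz_rank_v n b hv (a-j) (kz_mem_v_mul v (a-j))
      have e6 : Module.finrank k
          ((LinearMap.range (kzMul (ι k v) a (a+1) (kz_mem_v_mul v a))
            ⊓ LinearMap.range (kzMul ω (a+1-j) (a+1) hmw1) : Submodule k (⋀[k]^(a+1) V)))
          = n.choose (a-j) := by
        rw [inf_comm, hint]
        rw [hker] at hφ
        omega
      rw [if_pos hja]
      push_cast
      omega
    · -- intersection is trivial
      have hbot : LinearMap.range (kzMul (ι k v) a (a+1) (kz_mem_v_mul v a))
          ⊓ LinearMap.range (kzMul ω (a+1-j) (a+1) hmw1) = ⊥ := by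
        rw [eq_bot_iff]
        rintro x ⟨hx1, hx2⟩
        obtain ⟨u, hu⟩ := hx1
        obtain ⟨y, hy⟩ := hx2
        have hxv : ι k v * (x : ExteriorAlgebra k V) = 0 := by
          have h1 : (x : ExteriorAlgebra k V) = ι k v * (u : ExteriorAlgebra k V) := by
            rw [← hu]; rfl
          rw [h1, ← mul_assoc, ι_sq_zero, zero_mul]
        have h2 : (x : ExteriorAlgebra k V) = ω * (y : ExteriorAlgebra k V) := by
          rw [← hy]; rfl
        have h3 : ω * (ι k v * (y : ExteriorAlgebra k V)) = 0 := by
          have h4 : ι k v * (ω * (y : ExteriorAlgebra k V)) = 0 := by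
            rw [← h2]; exact hxv
          rw [← mul_assoc, kz_ι_mul_comm hω v, smul_mul_assoc, mul_assoc] at h4
          rcases smul_eq_zero.1 h4 with h | h
          · exact absurd h (by simp)
          · exact h
        have h6 : ι k v * (y : ExteriorAlgebra k V) = 0 :=
          einj2 _ (kz_pow_congr (by omega) (kz_mem_v_mul v (a+1-j) _ y.2)) h3
        have h7 : (y : ExteriorAlgebra k V) = 0 :=
          kz_zero_inj hv (kz_pow_congr (by omega) y.2) h6
        have : (x : ExteriorAlgebra k V) = 0 := by rw [h2, h7, mul_zero]
        exact (Submodule.mem_bot k).2 (Subtype.ext this)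
      have e6 : Module.finrank k
          ((LinearMap.range (kzMul (ι k v) a (a+1) (kz_mem_v_mul v a))
            ⊓ LinearMap.range (kzMul ω (a+1-j) (a+1) hmw1) : Submodule k (⋀[k]^(a+1) V)))
          = 0 := by
        rw [hbot, finrank_bot]
      rw [if_neg hja]
      push_cast
      omega
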